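/- Let G be a quasi-optimal 1-plane graph. Then either G is an optimal 1-plane graph, or G = G' ⊖ H, where G' is a quasi-optimal 1-plane graph and H is an optimal 1-plane graph. -/

import Mathlib

/-!
Formalization preamble: plane drawings of simple graphs, 1-plane graphs,
optimal and quasi-optimal 1-plane graphs (Ouyang–Huang–Zhang).
-/

noncomputable section

namespace OnePlanarPaper

/-- Points of the plane. -/
abbrev Pt : Type := ℝ × ℝ

/-- A (good) drawing in the plane of the simple graph `H`, whose relevant
vertices form the set `s`.  Each vertex is placed at a point of the plane and
each edge is drawn as a simple arc joining the placements of its endpoints;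
the interior of an arc avoids all vertex points, two distinct edges share at
most one non-vertex point (and none at all if they are adjacent), and no three
edges pass through a common non-vertex point. -/
structure PlaneDrawing {W : Type*} (H : SimpleGraph W) (s : Set W) where
  support : ∀ ⦃u v : W⦄, H.Adj u v → u ∈ s ∧ v ∈ s
  pos : W → Pt
  pos_injOn : Set.InjOn pos s
  arc : H.edgeSet → ℝ → Pt
  arc_cont : ∀ e, ContinuousOn (arc e) (Set.Icc 0 1)
  arc_injOn : ∀ e, Set.InjOn (arc e) (Set.Icc 0 1)
  arc_ends : ∀ e : H.edgeSet, Sym2.map pos (e : Sym2 W) = s(arc e 0, arc e 1)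
  arc_avoid : ∀ e : H.edgeSet, ∀ t ∈ Set.Ioo (0:ℝ) 1, arc e t ∉ pos '' s
  pair_once : ∀ e f : H.edgeSet, e ≠ f →
    (((arc e '' Set.Icc 0 1) ∩ (arc f '' Set.Icc 0 1)) \ (pos '' s)).Subsingleton
  adj_no_cross : ∀ e f : H.edgeSet, e ≠ f →
    (∃ w : W, w ∈ (e : Sym2 W) ∧ w ∈ (f : Sym2 W)) →
    (((arc e '' Set.Icc 0 1) ∩ (arc f '' Set.Icc 0 1)) \ (pos '' s)) = ∅
  no_triple : ∀ e f g : H.edgeSet, e ≠ f → e ≠ g → f ≠ g →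
    ∀ p : Pt, p ∉ pos '' s →
      ¬(p ∈ arc e '' Set.Icc 0 1 ∧ p ∈ arc f '' Set.Icc 0 1 ∧
        p ∈ arc g '' Set.Icc 0 1)

namespace PlaneDrawing

variable {W : Type*} {H : SimpleGraph W} {sW : Set W}

/-- The set of crossing points between two drawn edges: common points of the
two arcs that are not vertex points. -/
def meets (D : PlaneDrawing H sW) (e f : H.edgeSet) : Set Pt :=
  ((D.arc e '' Set.Icc 0 1) ∩ (D.arc f '' Set.Icc 0 1)) \ (D.pos '' sW)

/-- The set of all crossing points of the drawing. -/
def crossSet (D : PlaneDrawing H sW) : Set Pt :=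
  {p | ∃ e f : H.edgeSet, e ≠ f ∧ p ∈ D.meets e f}

/-- The number of crossings of the drawing. -/
def crossCount (D : PlaneDrawing H sW) : ℕ := D.crossSet.ncard

/-- The drawing is 1-planar: every edge is crossed at most once. -/
def IsOnePlanar (D : PlaneDrawing H sW) : Prop :=
  ∀ e : H.edgeSet, ({p | ∃ f : H.edgeSet, f ≠ e ∧ p ∈ D.meets e f}).Subsingleton

end PlaneDrawing

/-- The crossing number of an abstract graph `H` with vertex set `s`:
the minimum number of crossings over all (good) drawings of `H` in the plane. -/
def crossingNumber {W : Type*} (H : SimpleGraph W) (sW : Set W) : ℕ :=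
  sInf {n | ∃ D : PlaneDrawing H sW, D.crossCount = n}

/-- A 1-plane graph: a graph whose vertices are finitely many points of the
plane, together with a 1-planar drawing placing every vertex at itself. -/
structure OnePlaneGraph where
  verts : Finset Pt
  G : SimpleGraph Pt
  drawing : PlaneDrawing G (↑verts : Set Pt)
  pos_id : drawing.pos = id
  onePlanar : drawing.IsOnePlanar

namespace OnePlaneGraph

/-- The number of crossings in the (given) 1-planar drawing of `P`. -/
def crossCount (P : OnePlaneGraph) : ℕ := P.drawing.crossCount

/-- The number of edges of `P`. -/
def edgeCount (P : OnePlaneGraph) : ℕ := P.G.edgeSet.ncard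

/-- The degree of a vertex of `P`. -/
def degree (P : OnePlaneGraph) (v : Pt) : ℕ := {u : Pt | P.G.Adj v u}.ncard

/-- `P'` extends `P` by adding edges: same vertices, and the arcs of all
edges of `P` are kept unchanged. -/
structure Extends (P' P : OnePlaneGraph) : Prop where
  verts_eq : P'.verts = P.verts
  le : P.G ≤ P'.G
  arc_eq : ∀ (e : Sym2 Pt) (he : e ∈ P.G.edgeSet),
    P'.drawing.arc ⟨e, SimpleGraph.edgeSet_mono le he⟩ = P.drawing.arc ⟨e, he⟩

/-- The 1-plane graph `P` is maximal: no edge between two non-adjacent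
vertices can be added to the drawing without violating 1-planarity
or simplicity. -/
def MaximalOnePlane (P : OnePlaneGraph) : Prop :=
  ∀ u ∈ P.verts, ∀ v ∈ P.verts, u ≠ v → ¬ P.G.Adj u v →
    ∀ P' : OnePlaneGraph,
      P'.G = P.G ⊔ SimpleGraph.fromEdgeSet {s(u, v)} → ¬ P'.Extends P

/-- An optimal 1-plane graph: a maximal 1-plane graph with `4n - 8` edges. -/
def IsOptimal (P : OnePlaneGraph) : Prop :=
  P.MaximalOnePlane ∧ (P.edgeCount : ℤ) = 4 * P.verts.card - 8

/-- `P` is the edge merging `P₁ ⊖ P₂` of the two 1-plane graphs `P₁` and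
`P₂` (both drawn inside `P`, with `P₂` meeting `P₁` precisely along one
common non-crossing edge and its two endpoints). -/
structure IsMergeOf (P P₁ P₂ : OnePlaneGraph) : Prop where
  le₁ : P₁.G ≤ P.G
  le₂ : P₂.G ≤ P.G
  verts_union : P₁.verts ∪ P₂.verts = P.verts
  g_union : P₁.G ⊔ P₂.G = P.G
  arc_eq₁ : ∀ (e : Sym2 Pt) (he : e ∈ P₁.G.edgeSet),
    P.drawing.arc ⟨e, SimpleGraph.edgeSet_mono le₁ he⟩ = P₁.drawing.arc ⟨e, he⟩
  arc_eq₂ : ∀ (e : Sym2 Pt) (he : e ∈ P₂.G.edgeSet),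
    P.drawing.arc ⟨e, SimpleGraph.edgeSet_mono le₂ he⟩ = P₂.drawing.arc ⟨e, he⟩
  no_cross_between : ∀ (e₁ : Sym2 Pt) (h₁ : e₁ ∈ P₁.G.edgeSet)
      (e₂ : Sym2 Pt) (h₂ : e₂ ∈ P₂.G.edgeSet), e₁ ≠ e₂ →
      P.drawing.meets ⟨e₁, SimpleGraph.edgeSet_mono le₁ h₁⟩
        ⟨e₂, SimpleGraph.edgeSet_mono le₂ h₂⟩ = ∅
  shared : ∃ (u v : Pt) (huv : P₁.G.Adj u v), u ≠ v ∧ P₂.G.Adj u v ∧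
    P₁.G.edgeSet ∩ P₂.G.edgeSet = {s(u, v)} ∧
    ((P₁.verts : Set Pt) ∩ (P₂.verts : Set Pt)) = {u, v} ∧
    ∀ f : P.G.edgeSet, (f : Sym2 Pt) ≠ s(u, v) →
      P.drawing.meets ⟨s(u, v), (P.G.mem_edgeSet).mpr (le₁ huv)⟩ f = ∅

/-- Quasi-optimal 1-plane graphs: the smallest class of 1-plane graphs
containing all optimal 1-plane graphs and closed under edge merging of two
members of the class. -/
inductive QuasiOptimal : OnePlaneGraph → Prop
  | of_optimal (P : OnePlaneGraph) : P.IsOptimal → QuasiOptimal P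
  | of_merge (P P₁ P₂ : OnePlaneGraph) : P.IsMergeOf P₁ P₂ →
      QuasiOptimal P₁ → QuasiOptimal P₂ → QuasiOptimal P

/-- Generating sequences: `GenSeq P L` holds when the quasi-optimal 1-plane
graph `P` is built up by edge mergings from the list `L` of optimal 1-plane
graphs. -/
inductive GenSeq : OnePlaneGraph → List OnePlaneGraph → Prop
  | single (P : OnePlaneGraph) : P.IsOptimal → GenSeq P [P]
  | merge (P P₁ P₂ : OnePlaneGraph) (L₁ L₂ : List OnePlaneGraph) :
      P.IsMergeOf P₁ P₂ → GenSeq P₁ L₁ → GenSeq P₂ L₂ → GenSeq P (L₁ ++ L₂)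

/-- The drawn point set of the planarization `P^×`: all vertices together
with all points of all arcs. -/
def drawnSet (P : OnePlaneGraph) : Set Pt :=
  (↑P.verts : Set Pt) ∪ ⋃ e : P.G.edgeSet, P.drawing.arc e '' Set.Icc 0 1

/-- The faces of (the planarization of) `P`: connected components of the
complement of the drawn point set. -/
def faces (P : OnePlaneGraph) : Set (Set Pt) :=
  {F | ∃ p ∉ P.drawnSet, F = connectedComponentIn (P.drawnSet)ᶜ p}

/-- `∂(F)`: the set of vertices of the planarization `P^×` (true vertices and
crossing points) lying on the boundary of the face `F`. -/
def boundaryVerts (P : OnePlaneGraph) (F : Set Pt) : Set Pt :=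
  ((↑P.verts : Set Pt) ∪ P.drawing.crossSet) ∩ closure F

/-- `ε(F)`: the number of true vertices on the boundary of the face `F`. -/
def epsilon (P : OnePlaneGraph) (F : Set Pt) : ℕ :=
  ((↑P.verts : Set Pt) ∩ closure F).ncard

/-- `P` has vertex connectivity at least `k`. -/
def ConnectivityAtLeast (P : OnePlaneGraph) (k : ℕ) : Prop :=
  k < P.verts.card ∧ ∀ S : Finset Pt, S ⊆ P.verts → S.card < k →
    (P.G.induce (↑(P.verts \ S) : Set Pt)).Connected

/-- `P` is an EQ-graph: it can be extended to a quasi-optimal 1-plane graph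
by adding edges. -/
def IsEQ (P : OnePlaneGraph) : Prop :=
  ∃ Q : OnePlaneGraph, Q.Extends P ∧ QuasiOptimal Q

end OnePlaneGraph

/-- The abstract graph `H`, with vertex set `s`, is 1-planar: it admits a
1-planar drawing in the plane. -/
def IsOnePlanarOn {W : Type*} (H : SimpleGraph W) (sW : Set W) : Prop :=
  ∃ (Q : OnePlaneGraph) (φ : W → Pt), Set.InjOn φ sW ∧
    φ '' sW = (↑Q.verts : Set Pt) ∧
    ∀ u ∈ sW, ∀ v ∈ sW, (H.Adj u v ↔ Q.G.Adj (φ u) (φ v))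

/-- The associated graph of a generating sequence: one vertex for each member,
two members adjacent when they share exactly one edge. -/
def assocGraph (L : List OnePlaneGraph) : SimpleGraph (Fin L.length) where
  Adj i j := i ≠ j ∧ ((L.get i).G.edgeSet ∩ (L.get j).G.edgeSet).ncard = 1
  symm := by
    constructor
    intro i j h
    exact ⟨h.1.symm, by rw [Set.inter_comm]; exact h.2⟩
  loopless := by
    constructor
    intro i h
    exact h.1 rfl

end OnePlanarPaper
namespace OnePlanarPaper
open OnePlaneGraph

section Helpers

lemma verts_image (P : OnePlaneGraph) :
    P.drawing.pos '' (↑P.verts : Set Pt) = (↑P.verts : Set Pt) := by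
  rw [P.pos_id, Set.image_id]

lemma meets_comm {W : Type*} {H : SimpleGraph W} {s : Set W}
    (D : PlaneDrawing H s) (e f : H.edgeSet) : D.meets e f = D.meets f e := by
  unfold PlaneDrawing.meets
  rw [Set.inter_comm]

/-- Points of an arc that are vertices are endpoints of the edge. -/
lemma endpoint_mem (P : OnePlaneGraph) (e : P.G.edgeSet) {p : Pt}
    (hp : p ∈ P.drawing.arc e '' Set.Icc 0 1) (hv : p ∈ (↑P.verts : Set Pt)) :
    p ∈ (e : Sym2 Pt) := by
  obtain ⟨t, ht, rfl⟩ := hp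
  have hends := P.drawing.arc_ends e
  rw [P.pos_id] at hends
  have hid : Sym2.map (id : Pt → Pt) (e : Sym2 Pt) = (e : Sym2 Pt) :=
    congrFun Sym2.map_id _
  rw [hid] at hends
  have ht01 : t = 0 ∨ t = 1 := by
    by_contra h
    push_neg at h
    have hIoo : t ∈ Set.Ioo (0:ℝ) 1 :=
      ⟨lt_of_le_of_ne ht.1 (Ne.symm h.1), lt_of_le_of_ne ht.2 h.2⟩
    exact P.drawing.arc_avoid e t hIoo (by rw [verts_image]; exact hv)
  rcases ht01 with rfl | rfl
  · rw [hends]; exact Sym2.mem_mk_left _ _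
  · rw [hends]; exact Sym2.mem_mk_right _ _

lemma mem_verts_of_mem_edge {G' : SimpleGraph Pt} {s : Set Pt}
    (hsupp : ∀ ⦃u v : Pt⦄, G'.Adj u v → u ∈ s ∧ v ∈ s) {e : Sym2 Pt}
    (he : e ∈ G'.edgeSet) {p : Pt} (hp : p ∈ e) : p ∈ s := by
  induction e using Sym2.ind with
  | _ x y =>
    rw [SimpleGraph.mem_edgeSet] at he
    rcases Sym2.mem_iff.mp hp with rfl | rfl
    · exact (hsupp he).1
    · exact (hsupp he).2

/-- Embedding of edges along a subgraph relation. -/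
def emb {P : OnePlaneGraph} {G' : SimpleGraph Pt} (hle : G' ≤ P.G)
    (e : G'.edgeSet) : P.G.edgeSet :=
  ⟨e.1, SimpleGraph.edgeSet_mono hle e.2⟩

lemma emb_ne {P : OnePlaneGraph} {G' : SimpleGraph Pt} (hle : G' ≤ P.G)
    {e f : G'.edgeSet} (h : e ≠ f) : emb hle e ≠ emb hle f := by
  intro h'
  have hval : (emb hle e).1 = (emb hle f).1 := congrArg Subtype.val h'
  exact h (Subtype.ext hval)

lemma key_diff (P : OnePlaneGraph) {V' : Finset Pt} {G' : SimpleGraph Pt}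
    (hle : G' ≤ P.G) (hV : V' ⊆ P.verts)
    (hsupp : ∀ ⦃u v : Pt⦄, G'.Adj u v → u ∈ (↑V' : Set Pt) ∧ v ∈ (↑V' : Set Pt))
    (e : G'.edgeSet) {S : Set Pt}
    (hS : S ⊆ P.drawing.arc (emb hle e) '' Set.Icc 0 1) :
    S \ (↑V' : Set Pt) = S \ (↑P.verts : Set Pt) := by
  apply Set.Subset.antisymm
  · rintro p ⟨hpS, hp'⟩
    refine ⟨hpS, fun hpV => hp' ?_⟩
    exact mem_verts_of_mem_edge hsupp e.2 (endpoint_mem P (emb hle e) (hS hpS) hpV)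
  · rintro p ⟨hpS, hp'⟩
    exact ⟨hpS, fun h => hp' (Finset.coe_subset.mpr hV h)⟩

/-- Restriction of the drawing of a 1-plane graph to a subgraph supported on
a subset of the vertices. -/
def restrictDrawing (P : OnePlaneGraph) (V' : Finset Pt) (G' : SimpleGraph Pt)
    (hle : G' ≤ P.G) (hV : V' ⊆ P.verts)
    (hsupp : ∀ ⦃u v : Pt⦄, G'.Adj u v → u ∈ (↑V' : Set Pt) ∧ v ∈ (↑V' : Set Pt)) :
    PlaneDrawing G' (↑V' : Set Pt) where
  support := hsupp
  pos := id
  pos_injOn := Function.injective_id.injOn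
  arc := fun e => P.drawing.arc (emb hle e)
  arc_cont := fun e => P.drawing.arc_cont _
  arc_injOn := fun e => P.drawing.arc_injOn _
  arc_ends := fun e => by
    have h := P.drawing.arc_ends (emb hle e)
    rwa [P.pos_id] at h
  arc_avoid := fun e t ht hmem => by
    refine P.drawing.arc_avoid (emb hle e) t ht ?_
    rw [verts_image]
    rw [Set.image_id] at hmem
    exact Finset.coe_subset.mpr hV hmem
  pair_once := fun e f hef => by
    have h := P.drawing.pair_once (emb hle e) (emb hle f) (emb_ne hle hef)
    rw [verts_image] at h
    rw [Set.image_id,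
      key_diff P hle hV hsupp e Set.inter_subset_left]
    exact h
  adj_no_cross := fun e f hef hw => by
    have h := P.drawing.adj_no_cross (emb hle e) (emb hle f)
      (emb_ne hle hef) hw
    rw [verts_image] at h
    rw [Set.image_id,
      key_diff P hle hV hsupp e Set.inter_subset_left]
    exact h
  no_triple := fun e f g hef heg hfg p hp => by
    rw [Set.image_id] at hp
    by_cases hpV : p ∈ (↑P.verts : Set Pt)
    · rintro ⟨h1, -, -⟩
      exact hp (mem_verts_of_mem_edge hsupp e.2
        (endpoint_mem P (emb hle e) h1 hpV))
    · exact P.drawing.no_triple (emb hle e) (emb hle f) (emb hle g)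
        (emb_ne hle hef) (emb_ne hle heg) (emb_ne hle hfg) p
        (by rw [verts_image]; exact hpV)

lemma restrictDrawing_meets (P : OnePlaneGraph) {V' : Finset Pt}
    {G' : SimpleGraph Pt}
    (hle : G' ≤ P.G) (hV : V' ⊆ P.verts)
    (hsupp : ∀ ⦃u v : Pt⦄, G'.Adj u v → u ∈ (↑V' : Set Pt) ∧ v ∈ (↑V' : Set Pt))
    (e f : G'.edgeSet) :
    (restrictDrawing P V' G' hle hV hsupp).meets e f
      = P.drawing.meets (emb hle e) (emb hle f) := by
  unfold PlaneDrawing.meets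
  rw [verts_image]
  show _ \ (id '' (↑V' : Set Pt)) = _
  rw [Set.image_id]
  exact key_diff P hle hV hsupp e Set.inter_subset_left

/-- Restriction of a 1-plane graph to a subgraph supported on a subset of
the vertices. -/
def restrict (P : OnePlaneGraph) (V' : Finset Pt) (G' : SimpleGraph Pt)
    (hle : G' ≤ P.G) (hV : V' ⊆ P.verts)
    (hsupp : ∀ ⦃u v : Pt⦄, G'.Adj u v → u ∈ (↑V' : Set Pt) ∧ v ∈ (↑V' : Set Pt)) :
    OnePlaneGraph where
  verts := V'
  G := G'
  drawing := restrictDrawing P V' G' hle hV hsupp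
  pos_id := rfl
  onePlanar := by
    intro e
    have h := P.onePlanar (emb hle e)
    refine Set.Subsingleton.anti h ?_
    rintro p ⟨f, hfe, hpm⟩
    rw [restrictDrawing_meets] at hpm
    exact ⟨emb hle f, emb_ne hle hfe, hpm⟩

lemma restrict_meets (P : OnePlaneGraph) {V' : Finset Pt} {G' : SimpleGraph Pt}
    (hle : G' ≤ P.G) (hV : V' ⊆ P.verts)
    (hsupp : ∀ ⦃u v : Pt⦄, G'.Adj u v → u ∈ (↑V' : Set Pt) ∧ v ∈ (↑V' : Set Pt))
    (e f : G'.edgeSet) :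
    (restrict P V' G' hle hV hsupp).drawing.meets e f
      = P.drawing.meets (emb hle e) (emb hle f) :=
  restrictDrawing_meets P hle hV hsupp e f

end Helpers
end OnePlanarPaper
namespace OnePlanarPaper
open OnePlaneGraph

section Main

lemma edgeSet_finite (P : OnePlaneGraph) : P.G.edgeSet.Finite := by
  have hsub : P.G.edgeSet ⊆
      (fun p : Pt × Pt => s(p.1, p.2)) '' ((↑P.verts : Set Pt) ×ˢ ↑P.verts) := by
    intro e he
    induction e using Sym2.ind with
    | _ x y =>
      have h := P.drawing.support ((SimpleGraph.mem_edgeSet _).mp he)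
      exact ⟨(x, y), ⟨h.1, h.2⟩, rfl⟩
  exact (((P.verts.finite_toSet).prod P.verts.finite_toSet).image _).subset hsub

lemma quasi_card_ge {A : OnePlaneGraph} (h : QuasiOptimal A) :
    A.G.edgeSet.Nonempty → 3 ≤ A.verts.card := by
  induction h with
  | of_optimal P hopt =>
    intro hne
    have hpos : 0 < P.G.edgeSet.ncard := (Set.ncard_pos (edgeSet_finite P)).mpr hne
    have hcnt := hopt.2
    unfold OnePlaneGraph.edgeCount at hcnt
    omega
  | of_merge P P₁ P₂ m h₁ h₂ ih₁ ih₂ =>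
    intro _
    obtain ⟨u, v, huv, -⟩ := m.shared
    have h3 : 3 ≤ P₁.verts.card := ih₁ ⟨s(u, v), huv⟩
    have hsub : P₁.verts ⊆ P.verts := by
      rw [← m.verts_union]; exact Finset.subset_union_left
    exact le_trans h3 (Finset.card_le_card hsub)

lemma card_lt_of_merge {P A B : OnePlaneGraph} (m : IsMergeOf P A B)
    (hA : QuasiOptimal A) : B.verts.card < P.verts.card := by
  obtain ⟨a, b, hab, habne, hadjB, hE, hV, -⟩ := m.shared
  have hA3 : 3 ≤ A.verts.card := quasi_card_ge hA ⟨s(a, b), hab⟩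
  have hcap : A.verts ∩ B.verts = ({a, b} : Finset Pt) := by
    apply Finset.coe_injective
    rw [Finset.coe_inter, hV]
    simp
  have hcard2 : (A.verts ∩ B.verts).card = 2 := by
    rw [hcap, Finset.card_insert_of_notMem (by simp [habne]),
      Finset.card_singleton]
  have hun := m.verts_union
  have hc := Finset.card_union_add_card_inter A.verts B.verts
  rw [hun, hcard2] at hc
  omega

lemma meets_sub {P P₁ P₂ : OnePlaneGraph} (m : IsMergeOf P P₁ P₂)
    (e f : P₂.G.edgeSet) :
    P.drawing.meets (emb m.le₂ e) (emb m.le₂ f) ⊆ P₂.drawing.meets e f := by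
  unfold PlaneDrawing.meets
  rw [verts_image, verts_image]
  have harc1 : P.drawing.arc (emb m.le₂ e) = P₂.drawing.arc e := m.arc_eq₂ e.1 e.2
  have harc2 : P.drawing.arc (emb m.le₂ f) = P₂.drawing.arc f := m.arc_eq₂ f.1 f.2
  rw [harc1, harc2]
  have hsub : (↑P₂.verts : Set Pt) ⊆ ↑P.verts := by
    rw [← m.verts_union, Finset.coe_union]
    exact Set.subset_union_right
  exact Set.diff_subset_diff_right hsub

lemma mergeSymm {P P₁ P₂ : OnePlaneGraph} (h : IsMergeOf P P₁ P₂) :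
    IsMergeOf P P₂ P₁ := by
  obtain ⟨u, v, huv, hne, hadj2, hE, hV, hm⟩ := h.shared
  refine ⟨h.le₂, h.le₁, by rw [Finset.union_comm]; exact h.verts_union,
    by rw [sup_comm]; exact h.g_union, h.arc_eq₂, h.arc_eq₁, ?_, ?_⟩
  · intro e₂ h₂ e₁ h₁ hne'
    rw [meets_comm]
    exact h.no_cross_between e₁ h₁ e₂ h₂ hne'.symm
  · exact ⟨u, v, hadj2, hne, huv, by rw [Set.inter_comm]; exact hE,
      by rw [Set.inter_comm]; exact hV, fun f hf => hm f hf⟩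

lemma step {P P₁ P₂ A B : OnePlaneGraph} (m1 : IsMergeOf P P₁ P₂)
    (m2 : IsMergeOf P₂ A B) (hq1 : QuasiOptimal P₁) (hqA : QuasiOptimal A)
    {u v : Pt} (huv : P₁.G.Adj u v) (hune : u ≠ v) (hadj2 : P₂.G.Adj u v)
    (hE12 : P₁.G.edgeSet ∩ P₂.G.edgeSet = {s(u, v)})
    (hV12 : ((↑P₁.verts : Set Pt) ∩ ↑P₂.verts) = {u, v})
    (hm1 : ∀ f : P.G.edgeSet, (f : Sym2 Pt) ≠ s(u, v) →
      P.drawing.meets ⟨s(u, v), (P.G.mem_edgeSet).mpr (m1.le₁ huv)⟩ f = ∅)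
    (hcase : s(u, v) ∈ A.G.edgeSet) :
    ∃ Q : OnePlaneGraph, QuasiOptimal Q ∧ IsMergeOf P Q B := by
  have hleA : A.G ≤ P₂.G := m2.le₁
  have hleB : B.G ≤ P₂.G := m2.le₂
  have hleQ : P₁.G ⊔ A.G ≤ P.G := sup_le m1.le₁ (le_trans hleA m1.le₂)
  have hVA : A.verts ⊆ P₂.verts := by
    rw [← m2.verts_union]; exact Finset.subset_union_left
  have hVB : B.verts ⊆ P₂.verts := by
    rw [← m2.verts_union]; exact Finset.subset_union_right
  have hVQ : P₁.verts ∪ A.verts ⊆ P.verts := by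
    rw [← m1.verts_union]
    exact Finset.union_subset_union (Finset.Subset.refl _) hVA
  have hsuppQ : ∀ ⦃x y : Pt⦄, (P₁.G ⊔ A.G).Adj x y →
      x ∈ (↑(P₁.verts ∪ A.verts) : Set Pt) ∧
        y ∈ (↑(P₁.verts ∪ A.verts) : Set Pt) := by
    intro x y hxy
    rw [Finset.coe_union]
    rcases (SimpleGraph.sup_adj _ _ _ _).mp hxy with h | h
    · exact ⟨Set.mem_union_left _ (P₁.drawing.support h).1,
        Set.mem_union_left _ (P₁.drawing.support h).2⟩
    · exact ⟨Set.mem_union_right _ (A.drawing.support h).1,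
        Set.mem_union_right _ (A.drawing.support h).2⟩
  have hAadj : A.G.Adj u v := (SimpleGraph.mem_edgeSet _).mp hcase
  refine ⟨restrict P (P₁.verts ∪ A.verts) (P₁.G ⊔ A.G) hleQ hVQ hsuppQ, ?_, ?_⟩
  · -- quasi-optimality of Q, via IsMergeOf Q P₁ A
    refine QuasiOptimal.of_merge _ P₁ A ?_ hq1 hqA
    refine ⟨le_sup_left, le_sup_right, rfl, rfl, ?_, ?_, ?_, ?_⟩
    · intro e he
      exact m1.arc_eq₁ e he
    · intro e he
      exact (m1.arc_eq₂ e (SimpleGraph.edgeSet_mono hleA he)).trans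
        (m2.arc_eq₁ e he)
    · intro e₁ h₁ e₂ h₂ hne'
      refine (restrict_meets P hleQ hVQ hsuppQ _ _).trans ?_
      exact m1.no_cross_between e₁ h₁ e₂ (SimpleGraph.edgeSet_mono hleA h₂) hne'
    · refine ⟨u, v, huv, hune, hAadj, ?_, ?_, ?_⟩
      · apply Set.Subset.antisymm
        · intro x hx
          have hx' : x ∈ P₁.G.edgeSet ∩ P₂.G.edgeSet :=
            ⟨hx.1, SimpleGraph.edgeSet_mono hleA hx.2⟩
          rw [hE12] at hx'
          exact hx'
        · intro x hx
          rw [Set.mem_singleton_iff] at hx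
          subst hx
          exact ⟨huv, hcase⟩
      · apply Set.Subset.antisymm
        · intro x hx
          have hx' : x ∈ (↑P₁.verts : Set Pt) ∩ ↑P₂.verts :=
            ⟨hx.1, Finset.coe_subset.mpr hVA hx.2⟩
          rw [hV12] at hx'
          exact hx'
        · intro x hx
          rcases hx with rfl | rfl
          · exact ⟨(P₁.drawing.support huv).1, (A.drawing.support hAadj).1⟩
          · exact ⟨(P₁.drawing.support huv).2, (A.drawing.support hAadj).2⟩
      · intro f hf
        refine (restrict_meets P hleQ hVQ hsuppQ _ _).trans ?_
        exact hm1 ⟨f.1, SimpleGraph.edgeSet_mono hleQ f.2⟩ hf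
  · -- IsMergeOf P Q B
    have hQadj : (P₁.G ⊔ A.G).Adj u v := (SimpleGraph.sup_adj _ _ _ _).mpr (Or.inr hAadj)
    obtain ⟨a, b, hadjA, habne, hadjB, hEAB, hVAB, hm2⟩ := m2.shared
    have hsabA : s(a, b) ∈ A.G.edgeSet := hadjA
    have hsab2 : s(a, b) ∈ P₂.G.edgeSet := SimpleGraph.edgeSet_mono hleA hsabA
    have hsabAB : s(a, b) ∈ A.G.edgeSet ∩ B.G.edgeSet := by
      rw [hEAB]; exact Set.mem_singleton _
    refine ⟨hleQ, le_trans hleB m1.le₂,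
      ?_, ?_, ?_, ?_, ?_, ?_⟩
    · show (P₁.verts ∪ A.verts) ∪ B.verts = P.verts
      rw [Finset.union_assoc, m2.verts_union, m1.verts_union]
    · show (P₁.G ⊔ A.G) ⊔ B.G = P.G
      rw [sup_assoc, m2.g_union, m1.g_union]
    · intro e he
      rfl
    · intro e he
      exact (m1.arc_eq₂ e (SimpleGraph.edgeSet_mono hleB he)).trans
        (m2.arc_eq₂ e he)
    · intro e₁ h₁ e₂ h₂ hne'
      have h₁' : e₁ ∈ P₁.G.edgeSet ∪ A.G.edgeSet := by
        rw [← SimpleGraph.edgeSet_sup]; exact h₁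
      rcases h₁' with h₁' | h₁'
      · exact m1.no_cross_between e₁ h₁' e₂ (SimpleGraph.edgeSet_mono hleB h₂) hne'
      · have hsub := meets_sub m1 ⟨e₁, SimpleGraph.edgeSet_mono hleA h₁'⟩
          ⟨e₂, SimpleGraph.edgeSet_mono hleB h₂⟩
        have h0 := m2.no_cross_between e₁ h₁' e₂ h₂ hne'
        exact Set.eq_empty_of_subset_empty (hsub.trans (le_of_eq h0))
    · refine ⟨a, b, (SimpleGraph.sup_adj _ _ _ _).mpr (Or.inr hadjA), habne, hadjB, ?_, ?_, ?_⟩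
      · -- edge sets
        have hEQ : (P₁.G ⊔ A.G).edgeSet = P₁.G.edgeSet ∪ A.G.edgeSet :=
          SimpleGraph.edgeSet_sup _ _
        rw [show (restrict P (P₁.verts ∪ A.verts) (P₁.G ⊔ A.G) hleQ hVQ hsuppQ).G
            = P₁.G ⊔ A.G from rfl, hEQ]
        apply Set.Subset.antisymm
        · rintro x ⟨hx1 | hx1, hx2⟩
          · have hx' : x ∈ P₁.G.edgeSet ∩ P₂.G.edgeSet :=
              ⟨hx1, SimpleGraph.edgeSet_mono hleB hx2⟩
            rw [hE12, Set.mem_singleton_iff] at hx'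
            subst hx'
            have : s(u, v) ∈ A.G.edgeSet ∩ B.G.edgeSet := ⟨hcase, hx2⟩
            rw [hEAB] at this
            exact this
          · have : x ∈ A.G.edgeSet ∩ B.G.edgeSet := ⟨hx1, hx2⟩
            rw [hEAB] at this
            exact this
        · intro x hx
          rw [Set.mem_singleton_iff] at hx
          subst hx
          exact ⟨Or.inr hsabAB.1, hsabAB.2⟩
      · -- vertex sets
        rw [show ((restrict P (P₁.verts ∪ A.verts) (P₁.G ⊔ A.G) hleQ hVQ
            hsuppQ).verts : Finset Pt) = P₁.verts ∪ A.verts from rfl,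
          Finset.coe_union]
        apply Set.Subset.antisymm
        · rintro x ⟨hx1 | hx1, hx2⟩
          · have hx' : x ∈ (↑P₁.verts : Set Pt) ∩ ↑P₂.verts :=
              ⟨hx1, Finset.coe_subset.mpr hVB hx2⟩
            rw [hV12] at hx'
            have hxA : x ∈ (↑A.verts : Set Pt) := by
              rcases hx' with rfl | rfl
              · exact (A.drawing.support hAadj).1
              · exact (A.drawing.support hAadj).2
            have : x ∈ (↑A.verts : Set Pt) ∩ ↑B.verts := ⟨hxA, hx2⟩
            rw [hVAB] at this
            exact this
          · have : x ∈ (↑A.verts : Set Pt) ∩ ↑B.verts := ⟨hx1, hx2⟩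
            rw [hVAB] at this
            exact this
        · intro x hx
          rcases hx with rfl | rfl
          · exact ⟨Set.mem_union_right _ (A.drawing.support hadjA).1,
              (B.drawing.support hadjB).1⟩
          · exact ⟨Set.mem_union_right _ (A.drawing.support hadjA).2,
              (B.drawing.support hadjB).2⟩
      · -- crossing-free shared edge
        intro f hf
        have hfmem : f.1 ∈ P₁.G.edgeSet ∪ P₂.G.edgeSet := by
          rw [← SimpleGraph.edgeSet_sup, m1.g_union]; exact f.2
        by_cases hf2 : f.1 ∈ P₂.G.edgeSet
        · have hsub := meets_sub m1 ⟨s(a, b), hsab2⟩ ⟨f.1, hf2⟩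
          have h0 := hm2 ⟨f.1, hf2⟩ hf
          exact Set.eq_empty_of_subset_empty (hsub.trans (le_of_eq h0))
        · have hf1 : f.1 ∈ P₁.G.edgeSet := hfmem.resolve_right hf2
          have h0 := m1.no_cross_between f.1 hf1 s(a, b) hsab2 (fun h => hf h)
          rw [meets_comm]
          exact h0

lemma key_lemma : ∀ n : ℕ, ∀ P P₁ P₂ : OnePlaneGraph, P₂.verts.card ≤ n →
    IsMergeOf P P₁ P₂ → QuasiOptimal P₁ → QuasiOptimal P₂ →
    ∃ Q H : OnePlaneGraph, QuasiOptimal Q ∧ H.IsOptimal ∧ P.IsMergeOf Q H := by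
  intro n
  induction n using Nat.strong_induction_on with
  | _ n ih =>
    intro P P₁ P₂ hcard m1 hq1 hq2
    cases hq2 with
    | of_optimal _ hopt => exact ⟨P₁, P₂, hq1, hopt, m1⟩
    | of_merge _ A B m2 hA hB =>
      obtain ⟨u, v, huv, hune, hadj2, hE12, hV12, hm1⟩ := m1.shared
      by_cases hcase : s(u, v) ∈ A.G.edgeSet
      · obtain ⟨Q, hqQ, mP⟩ := step m1 m2 hq1 hA huv hune hadj2 hE12 hV12 hm1 hcase
        have hlt : B.verts.card < n :=
          lt_of_lt_of_le (card_lt_of_merge m2 hA) hcard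
        exact ih B.verts.card hlt P Q B le_rfl mP hqQ hB
      · have hcaseB : s(u, v) ∈ B.G.edgeSet := by
          have : (A.G ⊔ B.G).Adj u v := by rw [m2.g_union]; exact hadj2
          rcases (SimpleGraph.sup_adj _ _ _ _).mp this with h | h
          · exact absurd h hcase
          · exact h
        obtain ⟨Q, hqQ, mP⟩ := step m1 (mergeSymm m2) hq1 hB huv hune hadj2 hE12 hV12 hm1 hcaseB
        have hlt : A.verts.card < n :=
          lt_of_lt_of_le (card_lt_of_merge (mergeSymm m2) hB) hcard
        exact ih A.verts.card hlt P Q A le_rfl mP hqQ hA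

end Main
end OnePlanarPaper

namespace OnePlanarPaper
open OnePlaneGraph

/-- Proposition 2.3 (ii).  A quasi-optimal 1-plane graph is
either optimal, or the edge merging `G' ⊖ H` of a quasi-optimal 1-plane graph
`G'` and an optimal 1-plane graph `H`. -/
theorem quasiOptimal_cases (P : OnePlaneGraph) (hq : QuasiOptimal P) :
    P.IsOptimal ∨
      ∃ P' H : OnePlaneGraph, QuasiOptimal P' ∧ H.IsOptimal ∧
        P.IsMergeOf P' H := by
  cases hq with
  | of_optimal _ hopt => exact Or.inl hopt
  | of_merge _ P₁ P₂ m h1 h2 =>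
    exact Or.inr (key_lemma P₂.verts.card P P₁ P₂ le_rfl m h1 h2)

end OnePlanarPaper
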